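/- For the weights u_{nm} = 4/((m+2)(m+3)(m+4)), the function U satisfies U(1/3) = 2 ln 2 − 1, and this is the essential supremum of U on [−1,1]. -/

import Mathlib

open MeasureTheory Filter Finset
open scoped Topology



/-- Alternating harmonic series converges to log 2. -/
lemma log2_tendsto :
    Tendsto (fun n => ∑ i ∈ range n, (-1 : ℝ) ^ i / (i + 1)) atTop (𝓝 (Real.log 2)) := by
  obtain ⟨l, h⟩ :
      ∃ l, Tendsto (fun n => ∑ i ∈ range n, (-1 : ℝ) ^ i / (i + 1)) atTop (𝓝 l) := by
    obtain ⟨l, h⟩ := Antitone.tendsto_alternating_series_of_tendsto_zero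
      (f := fun i : ℕ => (1 : ℝ) / (i + 1))
      (antitone_iff_forall_lt.mpr fun _ _ _ => by gcongr)
      tendsto_one_div_add_atTop_nhds_zero_nat
    exact ⟨l, by simpa [mul_one_div, div_eq_mul_inv] using h⟩
  have abel := Real.tendsto_tsum_powerSeries_nhdsWithin_lt h
  have m : 𝓝[<] (1 : ℝ) ≤ 𝓝 1 := nhdsWithin_le_nhds
  have abel2 : Tendsto (fun x : ℝ => (∑' n : ℕ, (-1 : ℝ) ^ n / (n + 1) * x ^ n) * x)
      (𝓝[<] 1) (𝓝 (l * 1)) := abel.mul (tendsto_id.mono_left m)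
  rw [mul_one] at abel2
  have abel3 : Tendsto (fun x : ℝ => Real.log (1 + x)) (𝓝[<] 1) (𝓝 l) := by
    apply abel2.congr'
    rw [eventuallyEq_nhdsWithin_iff, Metric.eventually_nhds_iff]
    refine ⟨1, zero_lt_one, fun {y} hy1 hy2 => ?_⟩
    rw [Real.dist_eq, abs_sub_lt_iff] at hy1
    rw [Set.mem_Iio] at hy2
    have hy : |y| < 1 := by rw [abs_lt]; constructor <;> linarith
    have hs : HasSum (fun n : ℕ => (-1 : ℝ) ^ n * y ^ (n + 1) / (n + 1)) (Real.log (1 + y)) := by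
      have h1 := (Real.hasSum_pow_div_log_of_abs_lt_one (x := -y) (by rwa [abs_neg])).neg
      rw [sub_neg_eq_add, neg_neg] at h1
      refine h1.congr_fun fun n => ?_
      rw [neg_pow, pow_succ]
      ring
    rw [← hs.tsum_eq, ← tsum_mul_right]
    congr 1
    ext n
    rw [pow_succ]
    ring
  have final : Tendsto (fun x : ℝ => Real.log (1 + x)) (𝓝[<] 1) (𝓝 (Real.log 2)) := by
    have : ContinuousAt (fun x : ℝ => Real.log (1 + x)) 1 :=
      (Real.continuousAt_log (by norm_num)).comp (by fun_prop)
    have := this.tendsto.mono_left m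
    norm_num at this
    exact this
  rwa [tendsto_nhds_unique abel3 final] at h



lemma partial_eq (K : ℕ) :
    ∑ k ∈ range K, ((1 : ℝ) / (2 * k + 3) - 1 / (2 * k + 4)) =
      (∑ i ∈ range (2 * K + 2), (-1 : ℝ) ^ i / (i + 1)) - 1 / 2 := by
  induction K with
  | zero => norm_num [Finset.sum_range_succ]
  | succ K ih =>
      have h2 : 2 * (K + 1) + 2 = (2 * K + 2) + 1 + 1 := by ring
      have hr : ∑ i ∈ range ((2 * K + 2) + 1 + 1), (-1 : ℝ) ^ i / (i + 1) =
          (∑ i ∈ range (2 * K + 2), (-1 : ℝ) ^ i / (i + 1)) +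
            (-1 : ℝ) ^ (2 * K + 2) / ((2 * K + 2 : ℕ) + 1) +
            (-1 : ℝ) ^ (2 * K + 2 + 1) / ((2 * K + 2 + 1 : ℕ) + 1) := by
        rw [Finset.sum_range_succ, Finset.sum_range_succ]
      rw [Finset.sum_range_succ, ih, h2, hr]
      have he : (-1 : ℝ) ^ (2 * K + 2) = 1 := Even.neg_one_pow ⟨K + 1, by ring⟩
      have ho : (-1 : ℝ) ^ (2 * K + 2 + 1) = -1 := Odd.neg_one_pow ⟨K + 1, by ring⟩
      rw [he, ho]
      push_cast
      ring

lemma hasSum_pairs :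
    HasSum (fun k : ℕ => (1 : ℝ) / (2 * k + 3) - 1 / (2 * k + 4)) (Real.log 2 - 1 / 2) := by
  have hnn : ∀ k : ℕ, (0 : ℝ) ≤ 1 / (2 * k + 3) - 1 / (2 * k + 4) := by
    intro k
    rw [sub_nonneg]
    apply one_div_le_one_div_of_le <;> [positivity; linarith]
  rw [hasSum_iff_tendsto_nat_of_nonneg hnn]
  have hτ : Tendsto (fun K : ℕ => 2 * K + 2) atTop atTop :=
    tendsto_atTop_atTop.mpr fun b => ⟨b, fun a ha => by omega⟩
  have := (log2_tendsto.comp hτ).sub_const (1 / 2)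
  apply this.congr
  intro K
  exact (partial_eq K).symm

lemma hasSum_main :
    HasSum (fun k : ℕ => (2 : ℝ) / ((2 * k + 3) * (2 * k + 4))) (2 * Real.log 2 - 1) := by
  have := hasSum_pairs.mul_left 2
  have heq : ∀ k : ℕ, 2 * ((1 : ℝ) / (2 * k + 3) - 1 / (2 * k + 4)) =
      2 / ((2 * k + 3) * (2 * k + 4)) := by
    intro k
    have h3 : (2 * (k : ℝ) + 3) ≠ 0 := by positivity
    have h4 : (2 * (k : ℝ) + 4) ≠ 0 := by positivity
    field_simp
    ring
  rw [show 2 * Real.log 2 - 1 = 2 * (Real.log 2 - 1 / 2) by ring]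
  exact this.congr_fun fun k => (heq k).symm

lemma hasSum_tail (M : ℕ) :
    HasSum (fun j : ℕ => (4 : ℝ) / ((j + M + 2) * (j + M + 3) * (j + M + 4)))
      (2 / ((M + 2) * (M + 3))) := by
  set b : ℕ → ℝ := fun j => 2 / ((j + M + 2) * (j + M + 3)) with hb
  have hterm : ∀ j : ℕ,
      (4 : ℝ) / ((j + M + 2) * (j + M + 3) * (j + M + 4)) = b j - b (j + 1) := by
    intro j
    have h2 : ((j : ℝ) + M + 2) ≠ 0 := by positivity
    have h3 : ((j : ℝ) + M + 3) ≠ 0 := by positivity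
    have h4 : ((j : ℝ) + M + 4) ≠ 0 := by positivity
    simp only [hb]
    push_cast
    rw [div_sub_div _ _ (by positivity) (by positivity), div_eq_div_iff (by positivity) (by positivity)]
    ring
  have hnn : ∀ j : ℕ, (0 : ℝ) ≤ 4 / ((j + M + 2) * (j + M + 3) * (j + M + 4)) := by
    intro j; positivity
  rw [hasSum_iff_tendsto_nat_of_nonneg hnn]
  have hps : ∀ n : ℕ, ∑ j ∈ range n, (4 : ℝ) / ((j + M + 2) * (j + M + 3) * (j + M + 4)) =
      b 0 - b n := by
    intro n
    rw [Finset.sum_congr rfl fun j _ => hterm j]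
    exact Finset.sum_range_sub' b n
  have hb0 : b 0 = 2 / ((M + 2) * (M + 3)) := by simp [hb]
  have hbn : Tendsto b atTop (𝓝 0) := by
    apply Filter.Tendsto.const_div_atTop
    apply Filter.Tendsto.atTop_mul_atTop₀ <;>
      exact tendsto_atTop_add_const_right _ _
        (tendsto_atTop_add_const_right _ _ tendsto_natCast_atTop_atTop)
  have := (tendsto_const_nhds (x := b 0)).sub hbn
  rw [sub_zero, hb0] at this
  exact this.congr fun n => by rw [hps n, hb0]



lemma sum_neg_one_range (N : ℕ) :
    ∑ i ∈ range N, (-1 : ℤ) ^ i = if Even N then 0 else 1 := by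
  induction N with
  | zero => simp
  | succ n ih =>
      by_cases h : Even n
      · simp [Finset.sum_range_succ, ih, h, Nat.even_add_one, h.neg_one_pow]
      · simp [Finset.sum_range_succ, ih, h, Nat.even_add_one,
          (Nat.not_even_iff_odd.mp h).neg_one_pow]

lemma altsum_iff {n m : ℕ} (h : n ≤ m) :
    (∑ j ∈ Icc n m, (-1 : ℤ) ^ j = 0) ↔ Odd (m - n) := by
  have : ∑ j ∈ Icc n m, (-1 : ℤ) ^ j = (-1) ^ n * ∑ i ∈ range (m + 1 - n), (-1 : ℤ) ^ i := by
    rw [← Finset.Ico_add_one_right_eq_Icc, Finset.sum_Ico_eq_sum_range, Finset.mul_sum]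
    exact Finset.sum_congr rfl fun i _ => by rw [pow_add]
  rw [this, sum_neg_one_range, mul_eq_zero]
  have hne : ((-1 : ℤ) ^ n) ≠ 0 := pow_ne_zero _ (by norm_num)
  have key : Even (m + 1 - n) ↔ Odd (m - n) := by
    rw [Nat.even_iff, Nat.odd_iff]; omega
  simp only [hne, false_or]
  split_ifs with h1
  · simp [key.mp h1]
  · simp only [one_ne_zero, false_iff]
    exact fun hodd => h1 (key.mpr hodd)



lemma parity_of_zero_sum {e : ℕ → ℤ} (he : ∀ j, e j = 1 ∨ e j = -1) {n m : ℕ} (h : n ≤ m)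
    (hs : ∑ j ∈ Icc n m, e j = 0) : Odd (m - n) := by
  have hmod : (∑ j ∈ Icc n m, e j) % 2 = (∑ j ∈ Icc n m, (1 : ℤ)) % 2 := by
    rw [Finset.sum_int_mod, Finset.sum_int_mod _ _ (fun _ => (1 : ℤ))]
    congr 1
    refine Finset.sum_congr rfl fun j _ => ?_
    rcases he j with h1 | h1 <;> simp [h1]
  rw [hs, Finset.sum_const, Nat.card_Icc] at hmod
  have : ((m + 1 - n : ℕ) : ℤ) % 2 = 0 := by simpa using hmod.symm
  rw [Nat.odd_iff]
  omega

lemma card_filter_odd (N : ℕ) : ((range N).filter (fun j => Odd j)).card = N / 2 := by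
  induction N with
  | zero => simp
  | succ n ih =>
      rw [Finset.range_add_one, Finset.filter_insert]
      by_cases h : Odd n
      · rw [if_pos h, Finset.card_insert_of_notMem (by simp), ih]
        rw [Nat.odd_iff] at h
        omega
      · rw [if_neg h, ih]
        rw [Nat.odd_iff] at h
        omega

lemma card_filter_odd_sub (m : ℕ) :
    ((range (m + 1)).filter (fun n => Odd (m - n))).card = (m + 1) / 2 := by
  rw [← card_filter_odd (m + 1)]
  apply Finset.card_bij' (fun n _ => m - n) (fun j _ => m - j)
  · intro a ha
    simp only [Finset.mem_filter, Finset.mem_range] at ha ⊢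
    exact ⟨by omega, ha.2⟩
  · intro a ha
    simp only [Finset.mem_filter, Finset.mem_range] at ha ⊢
    refine ⟨by omega, ?_⟩
    rw [show m - (m - a) = a by omega]
    exact ha.2
  · intro a ha
    simp only [Finset.mem_filter, Finset.mem_range] at ha
    omega
  · intro a ha
    simp only [Finset.mem_filter, Finset.mem_range] at ha
    omega



noncomputable def uu (m : ℕ) : ENNReal :=
  ENNReal.ofReal (4 / (((m : ℝ) + 2) * ((m : ℝ) + 3) * ((m : ℝ) + 4)))

noncomputable def cnt (e : ℕ → ℤ) (m : ℕ) : ℕ :=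
  ((range (m + 1)).filter (fun n => ∑ j ∈ Icc n m, e j = 0)).card

lemma keyU (e : ℕ → ℤ) :
    (∑' p : ℕ × ℕ, if p.1 ≤ p.2 ∧ (∑ j ∈ Icc p.1 p.2, e j) = 0 then uu p.2 else 0) =
      ∑' m : ℕ, (cnt e m : ENNReal) * uu m := by
  have h1 : (∑' p : ℕ × ℕ, if p.1 ≤ p.2 ∧ (∑ j ∈ Icc p.1 p.2, e j) = 0 then uu p.2 else 0) =
      ∑' (m : ℕ) (n : ℕ), if n ≤ m ∧ (∑ j ∈ Icc n m, e j) = 0 then uu m else 0 := by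
    rw [ENNReal.tsum_prod']
    exact ENNReal.tsum_comm
  rw [h1]
  congr 1
  ext m
  have h2 : (∑' n : ℕ, if n ≤ m ∧ (∑ j ∈ Icc n m, e j) = 0 then uu m else 0) =
      ∑ n ∈ range (m + 1), if n ≤ m ∧ (∑ j ∈ Icc n m, e j) = 0 then uu m else 0 :=
    tsum_eq_sum fun n hn => by
      rw [if_neg]
      rintro ⟨hle, -⟩
      exact hn (Finset.mem_range.mpr (by omega))
  have h3 : ∀ n ∈ range (m + 1),
      (if n ≤ m ∧ (∑ j ∈ Icc n m, e j) = 0 then uu m else 0) =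
      (if (∑ j ∈ Icc n m, e j) = 0 then uu m else 0) := by
    intro n hn
    rw [Finset.mem_range] at hn
    by_cases h : (∑ j ∈ Icc n m, e j) = 0 <;> simp [h, Nat.lt_succ_iff.mp hn]
  rw [h2, Finset.sum_congr rfl h3, ← Finset.sum_filter, Finset.sum_const, nsmul_eq_mul]
  rfl

lemma cnt_alt (m : ℕ) : cnt (fun j => (-1 : ℤ) ^ j) m = (m + 1) / 2 := by
  rw [cnt, ← card_filter_odd_sub m]
  congr 1
  apply Finset.filter_congr
  intro n hn
  rw [Finset.mem_range] at hn
  simpa using altsum_iff (Nat.lt_succ_iff.mp hn)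

lemma cnt_le {e : ℕ → ℤ} (he : ∀ j, e j = 1 ∨ e j = -1) (m : ℕ) :
    cnt e m ≤ (m + 1) / 2 := by
  rw [cnt, ← card_filter_odd_sub m]
  apply Finset.card_le_card
  intro n hn
  simp only [Finset.mem_filter, Finset.mem_range] at hn ⊢
  exact ⟨hn.1, parity_of_zero_sum he (Nat.lt_succ_iff.mp hn.1) hn.2⟩

lemma count_split (m : ℕ) :
    (((m + 1) / 2 : ℕ) : ENNReal) * uu m = ∑' k : ℕ, if 2 * k + 1 ≤ m then uu m else 0 := by
  have h2 : (∑' k : ℕ, if 2 * k + 1 ≤ m then uu m else 0) =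
      ∑ k ∈ range (m + 1), if 2 * k + 1 ≤ m then uu m else 0 :=
    tsum_eq_sum fun k hk => by
      rw [if_neg]
      intro hle
      exact hk (Finset.mem_range.mpr (by omega))
  have h4 : (range (m + 1)).filter (fun k => 2 * k + 1 ≤ m) = range ((m + 1) / 2) := by
    ext k
    simp only [Finset.mem_filter, Finset.mem_range]
    omega
  rw [h2, ← Finset.sum_filter, h4, Finset.sum_const, nsmul_eq_mul, Finset.card_range]

lemma key_tail (M : ℕ)
    (ht : HasSum (fun j : ℕ => (4 : ℝ) / ((j + M + 2) * (j + M + 3) * (j + M + 4)))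
      (2 / ((M + 2) * (M + 3)))) :
    (∑' m : ℕ, if M ≤ m then uu m else 0) =
      ENNReal.ofReal (2 / (((M : ℝ) + 2) * ((M : ℝ) + 3))) := by
  have hinj : Function.Injective (fun j : ℕ => j + M) := fun a b h => by simpa using h
  have hsupp : Function.support (fun m : ℕ => if M ≤ m then uu m else 0) ⊆
      Set.range (fun j : ℕ => j + M) := by
    intro m hm
    rw [Function.mem_support] at hm
    by_cases h : M ≤ m
    · exact ⟨m - M, show m - M + M = m by omega⟩
    · exact absurd (if_neg h) hm
  rw [← hinj.tsum_eq hsupp]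
  simp only [le_add_iff_nonneg_left, zero_le, if_true]
  have heq : ∀ j : ℕ, uu (j + M) =
      ENNReal.ofReal ((4 : ℝ) / ((j + M + 2) * (j + M + 3) * (j + M + 4))) := by
    intro j; rw [uu]; push_cast; ring_nf
  rw [tsum_congr heq, ← ENNReal.ofReal_tsum_of_nonneg (fun j => by positivity) ht.summable,
    ht.tsum_eq]




lemma tsum_half_mul_uu :
    ∑' m : ℕ, (((m + 1) / 2 : ℕ) : ENNReal) * uu m = ENNReal.ofReal (2 * Real.log 2 - 1) := by
  rw [tsum_congr count_split, ENNReal.tsum_comm]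
  have h1 : ∀ k : ℕ, (∑' m : ℕ, if 2 * k + 1 ≤ m then uu m else 0) =
      ENNReal.ofReal ((2 : ℝ) / ((2 * k + 3) * (2 * k + 4))) := by
    intro k
    rw [key_tail (2 * k + 1) (hasSum_tail (2 * k + 1))]
    congr 1
    push_cast
    ring_nf
  rw [tsum_congr h1,
    ← ENNReal.ofReal_tsum_of_nonneg (fun k => by positivity) hasSum_main.summable,
    hasSum_main.tsum_eq]



lemma tail_bound {e : ℕ → ℤ} (he : ∀ n, e n = 1 ∨ e n = -1) {x : ℝ}
    (hx : HasSum (fun n : ℕ => (e n : ℝ) / 2 ^ (n + 1)) x) (k : ℕ) :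
    |x - ∑ j ∈ range k, (e j : ℝ) / 2 ^ (j + 1)| ≤ (1 / 2) ^ k := by
  have htail : HasSum (fun n : ℕ => (e (n + k) : ℝ) / 2 ^ (n + k + 1))
      (x - ∑ j ∈ range k, (e j : ℝ) / 2 ^ (j + 1)) := by
    have := (hasSum_nat_add_iff (f := fun j : ℕ => (e j : ℝ) / 2 ^ (j + 1)) k).mpr
      (by rw [sub_add_cancel]; exact hx)
    exact this
  have hg : HasSum (fun n : ℕ => ((1 : ℝ) / 2) ^ (n + k + 1)) ((1 / 2) ^ k) := by
    have h0 := hasSum_geometric_of_lt_one (r := (1 : ℝ) / 2) (by norm_num) (by norm_num)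
    have h1 := h0.mul_left (((1 : ℝ) / 2) ^ (k + 1))
    have h2 : ((1 : ℝ) / 2) ^ (k + 1) * (1 - 1 / 2)⁻¹ = (1 / 2) ^ k := by
      have h3 : ((1 : ℝ) - 1 / 2)⁻¹ = 2 := by norm_num
      rw [h3, pow_succ]
      ring
    rw [h2] at h1
    exact h1.congr_fun fun n => by rw [← pow_add]; ring_nf
  have hbound : ∀ n : ℕ, ‖(e (n + k) : ℝ) / 2 ^ (n + k + 1)‖ ≤ ((1 : ℝ) / 2) ^ (n + k + 1) := by
    intro n
    rw [norm_div, norm_pow]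
    have : ‖(e (n + k) : ℝ)‖ = 1 := by rcases he (n + k) with h | h <;> simp [h]
    rw [this, div_pow, one_pow]
    simp [abs_of_nonneg]
  have hsumm : Summable fun n : ℕ => ‖(e (n + k) : ℝ) / 2 ^ (n + k + 1)‖ :=
    Summable.of_nonneg_of_le (fun n => norm_nonneg _) hbound hg.summable
  calc |x - ∑ j ∈ range k, (e j : ℝ) / 2 ^ (j + 1)|
      = ‖∑' n : ℕ, (e (n + k) : ℝ) / 2 ^ (n + k + 1)‖ := by rw [htail.tsum_eq]; rfl
    _ ≤ ∑' n : ℕ, ‖(e (n + k) : ℝ) / 2 ^ (n + k + 1)‖ := norm_tsum_le_tsum_norm hsumm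
    _ ≤ ∑' n : ℕ, ((1 : ℝ) / 2) ^ (n + k + 1) := Summable.tsum_le_tsum hbound hsumm hg.summable
    _ = (1 / 2) ^ k := hg.tsum_eq

lemma one_third_partial (k : ℕ) :
    (1 : ℝ) / 3 - ∑ j ∈ range k, (-1 : ℝ) ^ j / 2 ^ (j + 1) = (-1) ^ k / (3 * 2 ^ k) := by
  induction k with
  | zero => norm_num
  | succ k ih =>
      rw [Finset.sum_range_succ, ← sub_sub, ih, pow_succ, pow_succ]
      have h2 : (2 : ℝ) ^ k ≠ 0 := by positivity
      field_simp
      ring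

lemma forced {e : ℕ → ℤ} (he : ∀ n, e n = 1 ∨ e n = -1) {x : ℝ}
    (hx : HasSum (fun n : ℕ => (e n : ℝ) / 2 ^ (n + 1)) x) (M : ℕ)
    (hclose : |x - 1 / 3| < 1 / (3 * 2 ^ M)) :
    ∀ k, k ≤ M → e k = (-1) ^ k := by
  intro k
  induction k using Nat.strong_induction_on with
  | _ k IH =>
    intro hkM
    have hdig : ∀ j, j < k → e j = (-1) ^ j := fun j hj => IH j hj (by omega)
    have hpk : (0 : ℝ) < 2 ^ k := by positivity
    have hclose' : |x - 1 / 3| < 1 / (3 * 2 ^ k) := by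
      refine lt_of_lt_of_le hclose ?_
      apply one_div_le_one_div_of_le (by positivity)
      have : (2 : ℝ) ^ k ≤ 2 ^ M := pow_le_pow_right₀ (by norm_num) hkM
      linarith
    have halt : ∑ j ∈ range k, (e j : ℝ) / 2 ^ (j + 1) =
        ∑ j ∈ range k, (-1 : ℝ) ^ j / 2 ^ (j + 1) := by
      refine Finset.sum_congr rfl fun j hj => ?_
      rw [hdig j (Finset.mem_range.mp hj)]
      push_cast
      ring
    have hA : ∑ j ∈ range k, (e j : ℝ) / 2 ^ (j + 1) =
        1 / 3 - (-1) ^ k / (3 * 2 ^ k) := by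
      rw [halt]
      have := one_third_partial k
      linarith
    have hub := tail_bound he hx (k + 1)
    rw [Finset.sum_range_succ, hA, sub_add_eq_sub_sub] at hub
    have h1 : ((1 : ℝ) / 2) ^ (k + 1) = 1 / (2 ^ k * 2) := by
      rw [pow_succ, div_pow, one_pow]
      ring
    have h2 : (2 : ℝ) ^ (k + 1) = 2 ^ k * 2 := by rw [pow_succ]
    rw [h1, h2] at hub
    rcases abs_le.mp hub with ⟨hl, hr⟩
    rcases abs_lt.mp hclose' with ⟨hl2, hr2⟩
    have hz : ∀ c : ℝ, c / (2 ^ k * 2) = c / 2 * (1 / 2 ^ k) := fun c => by ring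
    have hz3 : ∀ c : ℝ, c / (3 * 2 ^ k) = c / 3 * (1 / 2 ^ k) := fun c => by ring
    rcases he k with hek | hek <;> rcases Nat.even_or_odd k with hpar | hpar
    · rw [hek, hpar.neg_one_pow]
    · -- e k = 1, k odd : contradiction
      exfalso
      rw [hek, hpar.neg_one_pow] at hl hr
      have hinv : (0 : ℝ) < 1 / 2 ^ k := by positivity
      push_cast at hl hr
      simp only [hz, hz3] at hl hr hl2 hr2
      linarith
    · -- e k = -1, k even : contradiction
      exfalso
      rw [hek, hpar.neg_one_pow] at hl hr
      have hinv : (0 : ℝ) < 1 / 2 ^ k := by positivity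
      push_cast at hl hr
      simp only [hz, hz3] at hl hr hl2 hr2
      linarith
    · rw [hek, hpar.neg_one_pow]

/-- `U u d x` counts loops of the signed binary digit sequence `d x` with weights `u n m`,
where the pair `(n, m)` with `n ≤ m` contributes `u n m` iff `∑_{j=n}^m (d x)_j = 0`. -/
noncomputable def U (u : ℕ → ℕ → ENNReal) (d : ℝ → ℕ → ℤ) (x : ℝ) : ENNReal :=
  ∑' p : ℕ × ℕ,
    if p.1 ≤ p.2 ∧ (∑ j ∈ Finset.Icc p.1 p.2, d x j) = 0 then u p.1 p.2 else 0

theorem stmt_18 (d : ℝ → ℕ → ℤ)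
    (hd : ∀ᵐ x ∂(volume.restrict (Set.Icc (-1 : ℝ) 1)),
      (∀ n, d x n = 1 ∨ d x n = -1) ∧ HasSum (fun n : ℕ => (d x n : ℝ) / 2 ^ (n + 1)) x)
    (hd13 : ∀ n, d (1 / 3) n = (-1) ^ n) :
    U (fun _ m => ENNReal.ofReal (4 / (((m : ℝ) + 2) * ((m : ℝ) + 3) * ((m : ℝ) + 4)))) d (1 / 3) =
        ENNReal.ofReal (2 * Real.log 2 - 1) ∧
    essSup
        (U (fun _ m => ENNReal.ofReal (4 / (((m : ℝ) + 2) * ((m : ℝ) + 3) * ((m : ℝ) + 4)))) d)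
        (volume.restrict (Set.Icc (-1 : ℝ) 1)) =
      U (fun _ m => ENNReal.ofReal (4 / (((m : ℝ) + 2) * ((m : ℝ) + 3) * ((m : ℝ) + 4)))) d
        (1 / 3) := by
  set μ := volume.restrict (Set.Icc (-1 : ℝ) 1) with hμ
  set u : ℕ → ℕ → ENNReal :=
    fun _ m => ENNReal.ofReal (4 / (((m : ℝ) + 2) * ((m : ℝ) + 3) * ((m : ℝ) + 4))) with hu
  have hUeq : ∀ x : ℝ, U u d x = ∑' m : ℕ, (cnt (d x) m : ENNReal) * uu m := fun x => keyU (d x)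
  have hd13' : d (1 / 3) = fun j => (-1 : ℤ) ^ j := funext hd13
  have hhalf : U u d (1 / 3) = ∑' m : ℕ, (((m + 1) / 2 : ℕ) : ENNReal) * uu m := by
    rw [hUeq (1 / 3)]
    exact tsum_congr fun m => by rw [hd13', cnt_alt]
  have hA : U u d (1 / 3) = ENNReal.ofReal (2 * Real.log 2 - 1) := by
    rw [hhalf, tsum_half_mul_uu]
  refine ⟨hA, le_antisymm ?_ ?_⟩
  · -- essSup ≤ U (1/3)
    refine essSup_le_of_ae_le _ ?_
    filter_upwards [hd] with x hx
    calc U u d x = ∑' m : ℕ, (cnt (d x) m : ENNReal) * uu m := hUeq x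
      _ ≤ ∑' m : ℕ, (((m + 1) / 2 : ℕ) : ENNReal) * uu m :=
          ENNReal.tsum_le_tsum fun m =>
            mul_le_mul_left (Nat.cast_le.mpr (cnt_le hx.1 m)) _
      _ = U u d (1 / 3) := hhalf.symm
  · -- U (1/3) ≤ essSup
    set fa : ℕ × ℕ → ENNReal :=
      fun p => if p.1 ≤ p.2 ∧ (∑ j ∈ Finset.Icc p.1 p.2, (-1 : ℤ) ^ j) = 0 then uu p.2 else 0
      with hfa
    have hUalt : U u d (1 / 3) = ∑' p : ℕ × ℕ, fa p := by
      unfold U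
      exact tsum_congr fun p => by rw [hd13']; rfl
    set F : ℕ → Finset (ℕ × ℕ) := fun M => (range (M + 1)) ×ˢ (range (M + 1)) with hF
    have hmono : Monotone F := fun a b hab =>
      Finset.product_subset_product
        (Finset.range_subset_range.mpr (by omega)) (Finset.range_subset_range.mpr (by omega))
    have hcof : ∀ p : ℕ × ℕ, ∃ M, p ∈ F M := fun p =>
      ⟨max p.1 p.2, by
        simp only [hF, Finset.mem_product, Finset.mem_range]
        omega⟩
    have hFtop : Tendsto F atTop atTop := tendsto_atTop_finset_of_monotone hmono hcof
    have hhs : HasSum fa (U u d (1 / 3)) := by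
      rw [hUalt]; exact ENNReal.summable.hasSum
    have hL : Tendsto (fun M => ∑ p ∈ F M, fa p) atTop (𝓝 (U u d (1 / 3))) := hhs.comp hFtop
    refine le_of_tendsto' hL fun M => ?_
    by_contra hcon
    push_neg at hcon
    have hae := ae_lt_of_essSup_lt hcon
    have hae2 := hd.and hae
    set δ : ℝ := 1 / (3 * 2 ^ M) with hδ
    have hδpos : 0 < δ := by positivity
    have hδle : δ ≤ 1 / 3 := by
      rw [hδ]
      apply one_div_le_one_div_of_le (by norm_num)
      have : (1 : ℝ) ≤ 2 ^ M := one_le_pow₀ (by norm_num : (1:ℝ) ≤ 2)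
      linarith
    set J : Set ℝ := Set.Ioo (1 / 3 - δ) (1 / 3 + δ) with hJ
    have hJsub : J ⊆ Set.Icc (-1 : ℝ) 1 := by
      intro y hy
      rcases hy with ⟨h1, h2⟩
      constructor <;> [linarith; linarith]
    -- every good x in J has U u d x ≥ the partial sum
    have hkey : ∀ x ∈ J, (∀ n, d x n = 1 ∨ d x n = -1) →
        HasSum (fun n : ℕ => (d x n : ℝ) / 2 ^ (n + 1)) x →
        ∑ p ∈ F M, fa p ≤ U u d x := by
      intro x hxJ hpm hhsx
      have hclose : |x - 1 / 3| < δ := by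
        rcases hxJ with ⟨h1, h2⟩
        rw [abs_lt]
        constructor <;> linarith
      have hforced := forced hpm hhsx M (by rwa [← hδ])
      have hcongr : ∀ p ∈ F M, fa p =
          (if p.1 ≤ p.2 ∧ (∑ j ∈ Finset.Icc p.1 p.2, d x j) = 0 then u p.1 p.2 else 0) := by
        intro p hp
        simp only [hF, Finset.mem_product, Finset.mem_range] at hp
        have hsum : ∑ j ∈ Finset.Icc p.1 p.2, d x j =
            ∑ j ∈ Finset.Icc p.1 p.2, (-1 : ℤ) ^ j := by
          refine Finset.sum_congr rfl fun j hj => ?_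
          rw [Finset.mem_Icc] at hj
          exact hforced j (by omega)
        rw [hfa]
        simp only [hsum]
        rfl
      rw [Finset.sum_congr rfl hcongr]
      exact Summable.sum_le_tsum (F M) (fun p _ => zero_le) ENNReal.summable
    -- J is contained in the null set
    have hnull : μ {x | ¬ (((∀ n, d x n = 1 ∨ d x n = -1) ∧
        HasSum (fun n : ℕ => (d x n : ℝ) / 2 ^ (n + 1)) x) ∧
        U u d x < ∑ p ∈ F M, fa p)} = 0 := by
      rw [← ae_iff]
      exact hae2
    have hJnull : J ⊆ {x | ¬ (((∀ n, d x n = 1 ∨ d x n = -1) ∧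
        HasSum (fun n : ℕ => (d x n : ℝ) / 2 ^ (n + 1)) x) ∧
        U u d x < ∑ p ∈ F M, fa p)} := by
      intro x hxJ
      rintro ⟨⟨hpm, hhsx⟩, hlt⟩
      exact absurd hlt (not_lt.mpr (hkey x hxJ hpm hhsx))
    have hμJ : μ J = ENNReal.ofReal (2 * δ) := by
      rw [hμ, Measure.restrict_apply measurableSet_Ioo,
        Set.inter_eq_self_of_subset_left hJsub, Real.volume_Ioo]
      congr 1
      ring
    have : μ J = 0 := le_antisymm (hμJ ▸ hμJ ▸ (measure_mono hJnull).trans hnull.le) zero_le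
    rw [hμJ] at this
    have h2δ : (0 : ℝ) < 2 * δ := by linarith
    exact absurd this (by simp [ENNReal.ofReal_eq_zero]; linarith)
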